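/- Hölder continuity of the phase: Let p > 1, μ₀ > 0, C > 0, δ > 0, x₀ ∈ ℝ. Let T : (x₀−δ, x₀+δ) → ℝ be differentiable with |T'| ≤ δ̄ for some δ̄ < 1, let θ : (x₀−δ, x₀+δ) → ℝ be continuous at x₀, and let u be a function on {(ξ,t) : t < T(ξ)} such that for all X ∈ (x₀−δ, x₀+δ) and t sufficiently close to T(X): |u(X,t) − e^{iθ(X)} κ₀ (1−T'(X)²)^{1/(p−1)} (T(X)−t)^{−2/(p−1)}| ≤ C (T(X)−t)^{μ₀−2/(p−1)}, and sup over |ξ−X|≤(3/4)(T(X)−t) of |u(ξ,t) − e^{iθ(x₀)} κ₀ (1−T'(x₀)²)^{1/(p−1)} (T(x₀)−t+T'(x₀)(ξ−x₀))^{−2/(p−1)}| ≤ C (T(x₀)−t)^{μ₀−2/(p−1)} when X = x₀. Then there exist C' > 0 and δ'' > 0 such that for all x with |x − x₀| < δ'', |θ(x) − θ(x₀)| ≤ C' |x − x₀|^{μ₀}. -/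

import Mathlib

open Real MeasureTheory Set

noncomputable section

/-- κ₀ = (2(p+1)/(p−1)²)^{1/(p−1)} -/
def kappa0 (p : ℝ) : ℝ := (2 * (p + 1) / (p - 1) ^ 2) ^ (1 / (p - 1))

/-- κ(d,y) = κ₀ (1−d²)^{1/(p−1)} (1+dy)^{−2/(p−1)} -/
def kappaD (p d y : ℝ) : ℝ :=
  kappa0 p * (1 - d ^ 2) ^ (1 / (p - 1)) * (1 + d * y) ^ (-(2 / (p - 1)))

/-- ρ(y) = (1−y²)^{2/(p−1)} -/
def rho (p y : ℝ) : ℝ := (1 - y ^ 2) ^ (2 / (p - 1))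

/-- u is a C² solution of ∂²ₜu = ∂²ₓu + |u|^{p−1}u on D (first variable space, second time). -/
def IsWaveSolution (p : ℝ) (D : Set (ℝ × ℝ)) (u : ℝ → ℝ → ℂ) : Prop :=
  ContDiffOn ℝ 2 (fun q : ℝ × ℝ => u q.1 q.2) D ∧
  ∀ q ∈ D,
    deriv (deriv (fun t => u q.1 t)) q.2 =
      deriv (deriv (fun x => u x q.2)) q.1 +
        ((norm (u q.1 q.2) ^ (p - 1) : ℝ) : ℂ) * u q.1 q.2

/-- w is a C² solution of the self-similar equation (★) on D (first variable y, second s). -/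
def IsStarSolution (p : ℝ) (D : Set (ℝ × ℝ)) (w : ℝ → ℝ → ℂ) : Prop :=
  ContDiffOn ℝ 2 (fun q : ℝ × ℝ => w q.1 q.2) D ∧
  ∀ q ∈ D,
    deriv (deriv (fun s => w q.1 s)) q.2 =
      (((rho p q.1)⁻¹ : ℝ) : ℂ) *
          deriv (fun y => ((rho p y * (1 - y ^ 2) : ℝ) : ℂ) * deriv (fun z => w z q.2) y) q.1
        - ((2 * (p + 1) / (p - 1) ^ 2 : ℝ) : ℂ) * w q.1 q.2
        + ((norm (w q.1 q.2) ^ (p - 1) : ℝ) : ℂ) * w q.1 q.2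
        - (((p + 3) / (p - 1) : ℝ) : ℂ) * deriv (fun s => w q.1 s) q.2
        - 2 * (q.1 : ℂ) * deriv (fun y => deriv (fun s => w y s) q.2) q.1

/-- L² norm on the interval (a,b). -/
def L2norm (a b : ℝ) (f : ℝ → ℂ) : ℝ :=
  Real.sqrt (∫ x in Ioo a b, norm (f x) ^ 2)

/-- H¹ norm on the interval (a,b). -/
def H1norm (a b : ℝ) (f : ℝ → ℂ) : ℝ :=
  Real.sqrt (∫ x in Ioo a b, (norm (f x) ^ 2 + norm (deriv f x) ^ 2))

/-- The weighted norm of the energy space H. -/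
def Hnorm (p : ℝ) (q1 q2 : ℝ → ℂ) : ℝ :=
  Real.sqrt (∫ y in Ioo (-1 : ℝ) 1,
    (norm (q1 y) ^ 2 + norm (deriv q1 y) ^ 2 * (1 - y ^ 2) +
      norm (q2 y) ^ 2) * rho p y)

/-- The Lyapunov functional E. -/
def energy (p : ℝ) (w v : ℝ → ℂ) : ℝ :=
  ∫ y in Ioo (-1 : ℝ) 1,
    ((1 / 2) * norm (v y) ^ 2 + (1 / 2) * norm (deriv w y) ^ 2 * (1 - y ^ 2) +
      ((p + 1) / (p - 1) ^ 2) * norm (w y) ^ 2 -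
      (1 / (p + 1)) * norm (w y) ^ (p + 1)) * rho p y

/-- Self-similar variables around (x, T x). -/
def wSelf (p : ℝ) (u : ℝ → ℝ → ℂ) (T : ℝ → ℝ) (x y s : ℝ) : ℂ :=
  ((Real.exp (-s)) ^ (2 / (p - 1)) : ℝ) * u (x + y * Real.exp (-s)) (T x - Real.exp (-s))

/-- x₀ is a non-characteristic point for the blow-up curve T. -/
def NonChar (T : ℝ → ℝ) (x0 : ℝ) : Prop :=
  ∃ δ0 ∈ Ioo (0 : ℝ) 1, ∃ t0 < T x0, ∀ ξ τ : ℝ,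
    (ξ, τ) ≠ (x0, T x0) → t0 ≤ τ → τ ≤ T x0 - δ0 * |ξ - x0| → τ < T ξ

/-- Blow-up setup: u solves the wave equation on D_u = {t < T x} and admits no extension. -/
def BlowupSetup (p : ℝ) (T : ℝ → ℝ) (u : ℝ → ℝ → ℂ) : Prop :=
  LipschitzWith 1 T ∧
  IsWaveSolution p {q : ℝ × ℝ | q.2 < T q.1} u ∧
  ¬ ∃ (T' : ℝ → ℝ) (u' : ℝ → ℝ → ℂ),
      (∀ x, T x ≤ T' x) ∧ T' ≠ T ∧
      IsWaveSolution p {q : ℝ × ℝ | q.2 < T' q.1} u' ∧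
      ∀ q : ℝ × ℝ, q.2 < T q.1 → u' q.1 q.2 = u q.1 q.2

/-- Hypothesis (P): exponential convergence to the profile at every non-characteristic point. -/
def HypP (p : ℝ) (T : ℝ → ℝ) (u : ℝ → ℝ → ℂ) (C0 μ0 : ℝ) (d θ sf : ℝ → ℝ) : Prop :=
  0 < C0 ∧ 0 < μ0 ∧
  ∀ x, NonChar T x →
    d x ∈ Ioo (-1 : ℝ) 1 ∧
    ∀ s ≥ sf x,
      Hnorm p
        (fun y => wSelf p u T x y s -
          Complex.exp (Complex.I * (θ x : ℂ)) * ((kappaD p (d x) y : ℝ) : ℂ))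
        (fun y => deriv (fun z => wSelf p u T x y z) s)
      ≤ C0 * Real.exp (-μ0 * (s - sf x))

private lemma aux_abs_le_sin (t : ℝ) (ht : |t| ≤ 1) : |t| ≤ (4/3) * |Real.sin t| := by
  have main : ∀ s : ℝ, 0 ≤ s → s ≤ 1 → s ≤ (4/3) * |Real.sin s| := by
    intro s hs0 hs1
    rcases eq_or_lt_of_le hs0 with h | h
    · simp [← h]
    · have h1 := Real.sin_gt_sub_cube h
      have hsq : s ^ 2 ≤ 1 := by nlinarith
      have hcube : s ^ 3 ≤ s := by nlinarith
      have hsnn : 0 ≤ Real.sin s := by nlinarith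
      rw [abs_of_nonneg hsnn]; nlinarith
  rcases le_total 0 t with h | h
  · rw [abs_of_nonneg h] at ht ⊢; exact main t h ht
  · rw [abs_of_nonpos h] at ht ⊢
    have := main (-t) (by linarith) ht
    simpa [Real.sin_neg] using this

private lemma aux_im_trick (a b α β : ℝ) :
    |a * Real.sin (α - β)| ≤
      ‖Complex.exp (Complex.I * (α:ℂ)) * (a:ℂ) -
        Complex.exp (Complex.I * (β:ℂ)) * (b:ℂ)‖ := by
  have e1 : Complex.exp (Complex.I * (β:ℂ)) * Complex.exp ((↑(α - β):ℂ) * Complex.I)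
      = Complex.exp (Complex.I * (α:ℂ)) := by
    rw [← Complex.exp_add]; congr 1; push_cast; ring
  have key : Complex.exp (Complex.I * (α:ℂ)) * (a:ℂ) - Complex.exp (Complex.I * (β:ℂ)) * (b:ℂ)
      = Complex.exp (Complex.I * (β:ℂ)) *
        (Complex.exp ((↑(α - β) : ℂ) * Complex.I) * (a:ℂ) - (b:ℂ)) := by
    rw [mul_sub, ← mul_assoc, e1]
  rw [key, norm_mul, Complex.norm_exp]
  have hre : (Complex.I * (β:ℂ)).re = 0 := by simp
  rw [hre, Real.exp_zero, one_mul]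
  have him : (Complex.exp ((↑(α - β):ℂ) * Complex.I) * (a:ℂ) - (b:ℂ)).im
      = Real.sin (α - β) * a := by
    rw [Complex.sub_im, Complex.ofReal_im, Complex.mul_im, Complex.ofReal_re, Complex.ofReal_im,
      Complex.exp_ofReal_mul_I_im]
    ring
  calc |a * Real.sin (α - β)|
      = |(Complex.exp ((↑(α - β):ℂ) * Complex.I) * (a:ℂ) - (b:ℂ)).im| := by
        rw [him, mul_comm]
    _ ≤ _ := Complex.abs_im_le_norm _


set_option maxHeartbeats 1000000 in
/-- Hölder continuity of the phase. -/
theorem phase_holder_continuity (p μ0 C δ x0 δbar : ℝ) (hp : 1 < p)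
    (hμ0 : 0 < μ0) (hC : 0 < C) (hδ : 0 < δ) (hδbar : δbar < 1)
    (T dT θ : ℝ → ℝ) (u : ℝ → ℝ → ℂ)
    (hdiff : ∀ x, |x - x0| < δ → HasDerivAt T (dT x) x ∧ |dT x| ≤ δbar)
    (hθcont : ContinuousAt θ x0)
    (tstar : ℝ) (htstar : ∀ X, |X - x0| < δ → tstar < T X)
    (h1 : ∀ X, |X - x0| < δ → ∀ t, tstar ≤ t → t < T X →
      norm (u X t - Complex.exp (Complex.I * (θ X : ℂ)) *
          ((kappa0 p * (1 - dT X ^ 2) ^ (1 / (p - 1)) *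
            (T X - t) ^ (-(2 / (p - 1))) : ℝ) : ℂ))
        ≤ C * (T X - t) ^ (μ0 - 2 / (p - 1)))
    (h2 : ∀ t, tstar ≤ t → t < T x0 → ∀ ξ, |ξ - x0| ≤ (3 / 4) * (T x0 - t) →
      norm (u ξ t - Complex.exp (Complex.I * (θ x0 : ℂ)) *
          ((kappa0 p * (1 - dT x0 ^ 2) ^ (1 / (p - 1)) *
            (T x0 - t + dT x0 * (ξ - x0)) ^ (-(2 / (p - 1))) : ℝ) : ℂ))
        ≤ C * (T x0 - t) ^ (μ0 - 2 / (p - 1))) :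
    ∃ C' > (0 : ℝ), ∃ δ'' > (0 : ℝ), ∀ x, |x - x0| < δ'' →
      |θ x - θ x0| ≤ C' * |x - x0| ^ μ0 := by
  have hd0 := hdiff x0 (by simpa using hδ)
  have hδbar0 : 0 ≤ δbar := le_trans (abs_nonneg _) hd0.2
  have hp1 : (0:ℝ) < p - 1 := by linarith
  have hκ : 0 < kappa0 p := Real.rpow_pos_of_pos (by positivity) _
  have h2m : (0:ℝ) < 2 - δbar := by linarith
  have h2p : (0:ℝ) < 2 + δbar := by linarith
  set K := max ((2 - δbar) ^ (μ0 - 2 / (p - 1))) ((2 + δbar) ^ (μ0 - 2 / (p - 1))) with hK_def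
  have hK : 0 < K := lt_of_lt_of_le (Real.rpow_pos_of_pos h2m _) (le_max_left _ _)
  have hdb1 : δbar ^ 2 < 1 := by nlinarith
  set Alow := kappa0 p * (1 - δbar ^ 2) ^ (1 / (p - 1)) * (2 + δbar) ^ (-(2 / (p - 1)))
    with hAlow_def
  have hAlow : 0 < Alow := by
    exact mul_pos (mul_pos hκ (Real.rpow_pos_of_pos (by linarith) _))
      (Real.rpow_pos_of_pos h2p _)
  obtain ⟨δc, hδc, hθ1⟩ := Metric.continuousAt_iff.mp hθcont 1 one_pos
  have hTx0 : tstar < T x0 := htstar x0 (by simpa using hδ)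
  refine ⟨(4/3) * (2 * (C * K) / Alow), by positivity,
    min δc (min δ ((T x0 - tstar) / 2)), lt_min hδc (lt_min hδ (by linarith)), ?_⟩
  intro x hx
  rcases eq_or_ne x x0 with rfl | hne
  · simp [Real.zero_rpow (ne_of_gt hμ0)]
  have hr : 0 < |x - x0| := abs_pos.mpr (sub_ne_zero.mpr hne)
  set r := |x - x0| with hr_def
  have hxδ : r < δ := lt_of_lt_of_le hx (le_trans (min_le_right _ _) (min_le_left _ _))
  have hxc : dist x x0 < δc := by
    rw [Real.dist_eq, ← hr_def]; exact lt_of_lt_of_le hx (min_le_left _ _)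
  have hxT : r < (T x0 - tstar) / 2 :=
    lt_of_lt_of_le hx (le_trans (min_le_right _ _) (min_le_right _ _))
  set t := T x0 - 2 * r with ht_def
  have htstar' : tstar ≤ t := by rw [ht_def]; linarith
  have htT0 : t < T x0 := by rw [ht_def]; linarith
  have hTlip : |T x - T x0| ≤ δbar * r := by
    have := Convex.norm_image_sub_le_of_norm_hasDerivWithin_le
      (f := T) (f' := dT) (s := Metric.ball x0 δ) (C := δbar) (x := x0) (y := x)
      (fun y hy => ((hdiff y (by rwa [Metric.mem_ball, Real.dist_eq] at hy)).1).hasDerivWithinAt)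
      (fun y hy => by
        simpa using (hdiff y (by rwa [Metric.mem_ball, Real.dist_eq] at hy)).2)
      (convex_ball x0 δ)
      (by simpa [Metric.mem_ball, Real.dist_eq] using hδ)
      (by rw [Metric.mem_ball, Real.dist_eq, ← hr_def]; exact hxδ)
    simpa [Real.norm_eq_abs, ← hr_def] using this
  have habs := abs_le.mp hTlip
  have hTxt_lo : (2 - δbar) * r ≤ T x - t := by rw [ht_def]; nlinarith [habs.1]
  have hTxt_hi : T x - t ≤ (2 + δbar) * r := by rw [ht_def]; nlinarith [habs.2]
  have hTxt_pos : 0 < T x - t := lt_of_lt_of_le (by positivity) hTxt_lo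
  have htTx : t < T x := by linarith
  have H1 := h1 x hxδ t htstar' htTx
  have H2 := h2 t htstar' htT0 x (by rw [ht_def, ← hr_def]; linarith)
  set A := kappa0 p * (1 - dT x ^ 2) ^ (1 / (p - 1)) * (T x - t) ^ (-(2 / (p - 1))) with hA_def
  set B := kappa0 p * (1 - dT x0 ^ 2) ^ (1 / (p - 1)) *
    (T x0 - t + dT x0 * (x - x0)) ^ (-(2 / (p - 1))) with hB_def
  have tri : ‖Complex.exp (Complex.I * (θ x : ℂ)) * (A : ℂ) -
      Complex.exp (Complex.I * (θ x0 : ℂ)) * (B : ℂ)‖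
      ≤ C * (T x - t) ^ (μ0 - 2 / (p - 1)) + C * (T x0 - t) ^ (μ0 - 2 / (p - 1)) := by
    have h3 := norm_sub_le_norm_sub_add_norm_sub (Complex.exp (Complex.I * (θ x : ℂ)) * (A : ℂ)) (u x t)
      (Complex.exp (Complex.I * (θ x0 : ℂ)) * (B : ℂ))
    have h4 := norm_sub_rev (Complex.exp (Complex.I * (θ x : ℂ)) * (A : ℂ)) (u x t)
    rw [h4] at h3
    exact le_trans h3 (add_le_add H1 H2)
  have hdx := (hdiff x hxδ).2
  have hdx2 : dT x ^ 2 ≤ δbar ^ 2 := by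
    have := pow_le_pow_left₀ (abs_nonneg (dT x)) hdx 2
    rwa [sq_abs] at this
  have h1mdx : 0 < 1 - dT x ^ 2 := by nlinarith
  have hA_lb : Alow * r ^ (-(2 / (p - 1))) ≤ A := by
    rw [hA_def, hAlow_def]
    have e2 : (1 - δbar ^ 2) ^ (1 / (p - 1)) ≤ (1 - dT x ^ 2) ^ (1 / (p - 1)) :=
      Real.rpow_le_rpow (by linarith) (by linarith) (by positivity)
    have e3 : (2 + δbar) ^ (-(2 / (p - 1))) * r ^ (-(2 / (p - 1)))
        ≤ (T x - t) ^ (-(2 / (p - 1))) := by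
      rw [← Real.mul_rpow h2p.le hr.le]
      exact Real.rpow_le_rpow_of_nonpos hTxt_pos hTxt_hi (neg_nonpos.mpr (by positivity))
    calc kappa0 p * (1 - δbar ^ 2) ^ (1 / (p - 1)) * (2 + δbar) ^ (-(2 / (p - 1)))
          * r ^ (-(2 / (p - 1)))
        = kappa0 p * (1 - δbar ^ 2) ^ (1 / (p - 1)) *
            ((2 + δbar) ^ (-(2 / (p - 1))) * r ^ (-(2 / (p - 1)))) := by ring
      _ ≤ kappa0 p * (1 - dT x ^ 2) ^ (1 / (p - 1)) * ((T x - t) ^ (-(2 / (p - 1)))) := by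
          apply mul_le_mul (mul_le_mul_of_nonneg_left e2 hκ.le) e3
          · positivity
          · exact mul_nonneg hκ.le (Real.rpow_nonneg (by linarith) _)
      _ = _ := by ring
  have hA_nonneg : 0 ≤ A :=
    le_trans (le_of_lt (mul_pos hAlow (Real.rpow_pos_of_pos hr _))) hA_lb
  have hbound : ∀ s : ℝ, (2 - δbar) * r ≤ s → s ≤ (2 + δbar) * r →
      s ^ (μ0 - 2 / (p - 1)) ≤ K * r ^ (μ0 - 2 / (p - 1)) := by
    intro s hs1 hs2
    have hspos : 0 < s := lt_of_lt_of_le (by positivity) hs1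
    rcases le_or_gt 0 (μ0 - 2 / (p - 1)) with he | he
    · calc s ^ (μ0 - 2 / (p - 1)) ≤ ((2 + δbar) * r) ^ (μ0 - 2 / (p - 1)) :=
          Real.rpow_le_rpow hspos.le hs2 he
        _ = (2 + δbar) ^ (μ0 - 2 / (p - 1)) * r ^ (μ0 - 2 / (p - 1)) :=
          Real.mul_rpow h2p.le hr.le
        _ ≤ K * r ^ (μ0 - 2 / (p - 1)) :=
          mul_le_mul_of_nonneg_right (le_max_right _ _) (Real.rpow_nonneg hr.le _)
    · calc s ^ (μ0 - 2 / (p - 1)) ≤ ((2 - δbar) * r) ^ (μ0 - 2 / (p - 1)) :=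
          Real.rpow_le_rpow_of_nonpos (by positivity) hs1 he.le
        _ = (2 - δbar) ^ (μ0 - 2 / (p - 1)) * r ^ (μ0 - 2 / (p - 1)) :=
          Real.mul_rpow h2m.le hr.le
        _ ≤ K * r ^ (μ0 - 2 / (p - 1)) :=
          mul_le_mul_of_nonneg_right (le_max_left _ _) (Real.rpow_nonneg hr.le _)
  have hb1 : (T x - t) ^ (μ0 - 2 / (p - 1)) ≤ K * r ^ (μ0 - 2 / (p - 1)) :=
    hbound _ hTxt_lo hTxt_hi
  have hb2 : (T x0 - t) ^ (μ0 - 2 / (p - 1)) ≤ K * r ^ (μ0 - 2 / (p - 1)) := by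
    apply hbound <;> rw [ht_def] <;> nlinarith [mul_nonneg hδbar0 hr.le]
  have key : Alow * r ^ (-(2 / (p - 1))) * |Real.sin (θ x - θ x0)|
      ≤ 2 * (C * K) * r ^ (μ0 - 2 / (p - 1)) := by
    have hAs : A * |Real.sin (θ x - θ x0)|
        ≤ C * (T x - t) ^ (μ0 - 2 / (p - 1)) + C * (T x0 - t) ^ (μ0 - 2 / (p - 1)) := by
      have h5 := le_trans (aux_im_trick A B (θ x) (θ x0)) tri
      calc A * |Real.sin (θ x - θ x0)| = |A * Real.sin (θ x - θ x0)| := by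
            rw [abs_mul, abs_of_nonneg hA_nonneg]
        _ ≤ _ := h5
    calc Alow * r ^ (-(2 / (p - 1))) * |Real.sin (θ x - θ x0)|
        ≤ A * |Real.sin (θ x - θ x0)| := mul_le_mul_of_nonneg_right hA_lb (abs_nonneg _)
      _ ≤ C * (T x - t) ^ (μ0 - 2 / (p - 1)) + C * (T x0 - t) ^ (μ0 - 2 / (p - 1)) := hAs
      _ ≤ C * (K * r ^ (μ0 - 2 / (p - 1))) + C * (K * r ^ (μ0 - 2 / (p - 1))) :=
          add_le_add (mul_le_mul_of_nonneg_left hb1 hC.le)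
            (mul_le_mul_of_nonneg_left hb2 hC.le)
      _ = 2 * (C * K) * r ^ (μ0 - 2 / (p - 1)) := by ring
  have hrq : r ^ (-(2 / (p - 1))) * r ^ (2 / (p - 1)) = 1 := by
    rw [← Real.rpow_add hr]; simp
  have hexp : μ0 - 2 / (p - 1) + 2 / (p - 1) = μ0 := by ring
  have key2 : Alow * |Real.sin (θ x - θ x0)| ≤ 2 * (C * K) * r ^ μ0 := by
    calc Alow * |Real.sin (θ x - θ x0)|
        = (Alow * r ^ (-(2 / (p - 1))) * |Real.sin (θ x - θ x0)|) * r ^ (2 / (p - 1)) := by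
          rw [show (Alow * r ^ (-(2 / (p - 1))) * |Real.sin (θ x - θ x0)|) * r ^ (2 / (p - 1))
              = Alow * |Real.sin (θ x - θ x0)| * (r ^ (-(2 / (p - 1))) * r ^ (2 / (p - 1)))
            from by ring, hrq, mul_one]
      _ ≤ (2 * (C * K) * r ^ (μ0 - 2 / (p - 1))) * r ^ (2 / (p - 1)) :=
          mul_le_mul_of_nonneg_right key (Real.rpow_nonneg hr.le _)
      _ = 2 * (C * K) * r ^ μ0 := by
          rw [mul_assoc, ← Real.rpow_add hr, hexp]
  have hΔ : |θ x - θ x0| ≤ 1 := by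
    have := hθ1 hxc
    rw [Real.dist_eq] at this
    exact this.le
  have hsinb := aux_abs_le_sin (θ x - θ x0) hΔ
  have hsin_le : |Real.sin (θ x - θ x0)| ≤ 2 * (C * K) * r ^ μ0 / Alow := by
    rw [le_div_iff₀ hAlow]
    linarith [key2]
  calc |θ x - θ x0| ≤ (4/3) * |Real.sin (θ x - θ x0)| := hsinb
    _ ≤ (4/3) * (2 * (C * K) * r ^ μ0 / Alow) := by linarith
    _ = (4/3) * (2 * (C * K) / Alow) * r ^ μ0 := by ring
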